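/- arXiv:2202.12876 — 5 statements merged into one kernel-verified Lean document; each statement's English description precedes it below -/
import Mathlib

section
/- Combinatorial form of Lemma 4.5 (finite stabilizers on the semistable locus, rank-two torus case): Let M := ℤ² with dual lattice N := ℤ² and N_ℝ := ℝ², with the standard pairing ⟨λ, χ⟩. Let β_1, …, β_n ∈ M, let λ_0 ∈ N satisfy ⟨λ_0, β_i⟩ < 0 for all i, and let ℓ ∈ M_ℝ := ℝ² satisfy ⟨λ_0, ℓ⟩ < 0. Call a subset S ⊆ {1, …, n} ℓ-semistable if there is no λ ∈ N with ⟨λ, ℓ⟩ < 0 and ⟨λ, β_i⟩ ≥ 0 for all i ∈ S. Then the following are equivalent: (i) no β_i is a real scalar multiple of ℓ; (ii) for every ℓ-semistable subset S there is no nonzero λ ∈ N_ℝ with ⟨λ, β_i⟩ = 0 for all i ∈ S. -/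
/-- Integral pairing on the rank-two lattice. -/
def pairZ (lam chi : Fin 2 → ℤ) : ℤ := ∑ k, lam k * chi k

/-- Real pairing between `N_ℝ = ℝ²` and `M_ℝ = ℝ²`. -/
def pairR (lam chi : Fin 2 → ℝ) : ℝ := ∑ k, lam k * chi k

/-- A subset `S` of the index set is `ℓ`-semistable if no integral cocharacter pairing
negatively with `ℓ` pairs nonnegatively with all `β_i`, `i ∈ S`. -/
def IsSemistable {n : ℕ} (β : Fin n → Fin 2 → ℤ) (ℓ : Fin 2 → ℝ) (S : Set (Fin n)) : Prop :=
  ¬ ∃ lam : Fin 2 → ℤ, pairR (fun k => (lam k : ℝ)) ℓ < 0 ∧ ∀ i ∈ S, 0 ≤ pairZ lam (β i)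

/-- combinatorial form of Lemma 4.5: no weight is proportional to `ℓ`
iff every `ℓ`-semistable support has no nonzero real annihilator (finite stabilizers). -/
theorem finite_stabilizers_iff_no_weight_proportional {n : ℕ}
    (β : Fin n → Fin 2 → ℤ) (lam0 : Fin 2 → ℤ)
    (hlam0 : ∀ i, pairZ lam0 (β i) < 0)
    (ℓ : Fin 2 → ℝ) (hℓ : pairR (fun k => (lam0 k : ℝ)) ℓ < 0) :
    (∀ i, ¬ ∃ c : ℝ, (fun k => ((β i k : ℝ))) = c • ℓ) ↔
      (∀ S : Set (Fin n), IsSemistable β ℓ S →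
        ¬ ∃ lam : Fin 2 → ℝ, lam ≠ 0 ∧ ∀ i ∈ S, pairR lam (fun k => ((β i k : ℝ))) = 0) := by
  simp only [IsSemistable, pairZ, pairR, Fin.sum_univ_two] at *
  constructor
  · intro hno S hS
    rintro ⟨lam, hlamne, hann⟩
    by_cases hSe : ∃ i, i ∈ S
    · obtain ⟨i, hi⟩ := hSe
      have hlam01 : lam 0 ≠ 0 ∨ lam 1 ≠ 0 := by
        by_contra h
        push_neg at h
        exact hlamne (funext fun k => by fin_cases k <;> simp [h.1, h.2])
      -- integer determinant vanishing
      have hdet : ∀ j ∈ S, (β i 0) * (β j 1) - (β i 1) * (β j 0) = 0 := by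
        intro j hj
        have hi' := hann i hi
        have hj' := hann j hj
        have hR : ((β i 0 : ℝ)) * (β j 1) - (β i 1) * (β j 0) = 0 := by
          have h0 : (((β i 0 : ℝ)) * (β j 1) - (β i 1) * (β j 0)) * lam 0 = 0 := by
            linear_combination (β j 1 : ℝ) * hi' - (β i 1 : ℝ) * hj'
          have h1 : (((β i 0 : ℝ)) * (β j 1) - (β i 1) * (β j 0)) * lam 1 = 0 := by
            linear_combination (-(β j 0 : ℝ)) * hi' + (β i 0 : ℝ) * hj'
          rcases hlam01 with h | h
          · exact (mul_eq_zero.mp h0).resolve_right h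
          · exact (mul_eq_zero.mp h1).resolve_right h
        exact_mod_cast hR
      by_cases hdz : -(β i 1 : ℝ) * ℓ 0 + (β i 0 : ℝ) * ℓ 1 = 0
      · -- β i is proportional to ℓ : contradiction
        apply hno i
        have hl : ℓ 0 ≠ 0 ∨ ℓ 1 ≠ 0 := by
          by_contra h
          push_neg at h
          rw [h.1, h.2] at hℓ
          simp at hℓ
        have hD : (ℓ 0)^2 + (ℓ 1)^2 ≠ 0 := by
          rcases hl with h | h <;> positivity
        refine ⟨((β i 0 : ℝ) * ℓ 0 + (β i 1 : ℝ) * ℓ 1) / ((ℓ 0)^2 + (ℓ 1)^2), ?_⟩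
        funext k
        fin_cases k <;> simp only [Fin.zero_eta, Fin.mk_one, Pi.smul_apply, smul_eq_mul] <;> field_simp
        · linear_combination (ℓ 1) * hdz
        · linear_combination (-(ℓ 0)) * hdz
      · -- use ±(rotated β i) as destabilizer
        rcases lt_or_gt_of_ne hdz with hneg | hpos
        · exact hS ⟨![-(β i 1), β i 0], by simp; linarith,
            fun j hj => by
              have := hdet j hj
              simp [pairZ, Fin.sum_univ_two]
              omega⟩
        · exact hS ⟨![β i 1, -(β i 0)], by simp; linarith,
            fun j hj => by
              have := hdet j hj
              simp [pairZ, Fin.sum_univ_two]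
              omega⟩
    · push_neg at hSe
      exact hS ⟨lam0, hℓ, fun j hj => absurd hj (hSe j)⟩
  · intro h i
    rintro ⟨c, hc⟩
    have hck : ∀ k, (β i k : ℝ) = c * ℓ k := fun k => by
      have := congrFun hc k; simpa using this
    have hβℓ : (lam0 0 : ℝ) * (β i 0) + (lam0 1) * (β i 1) < 0 := by
      have := hlam0 i; exact_mod_cast this
    have hcpos : 0 < c := by
      rw [hck 0, hck 1] at hβℓ
      nlinarith
    apply h {i}
    · rintro ⟨lam, hl, hb⟩
      have hb' := hb i (Set.mem_singleton i)
      have hbR : (0:ℝ) ≤ (lam 0 : ℝ) * (β i 0) + (lam 1) * (β i 1) := by exact_mod_cast hb'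
      rw [hck 0, hck 1] at hbR
      nlinarith
    · refine ⟨![-(β i 1 : ℝ), (β i 0 : ℝ)], ?_, ?_⟩
      · have hβne : (β i 0 : ℝ) ≠ 0 ∨ (β i 1 : ℝ) ≠ 0 := by
          by_contra hz
          push_neg at hz
          rw [hz.1, hz.2] at hβℓ
          simp at hβℓ
        intro hz
        rcases hβne with hh | hh
        · exact hh (by simpa using congrFun hz 1)
        · exact hh (by have := congrFun hz 0; simp at this; simpa using this)
      · intro j hj
        rw [Set.mem_singleton_iff] at hj
        subst hj
        simp [Fin.sum_univ_two]
        ring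
end

section
/- Combinatorial form of the second assertion of Lemma 4.5: Let M := ℤ² with dual lattice N := ℤ² and N_ℝ := ℝ², with the standard pairing ⟨λ, χ⟩. Let ℓ ∈ M_ℝ := ℝ² be nonzero and let β_1, …, β_n ∈ M be such that no β_i is a real scalar multiple of ℓ. Then for every nonzero λ' ∈ N_ℝ with ⟨λ', ℓ⟩ = 0 there exists λ ∈ N with ⟨λ, ℓ⟩ < 0 such that for every i ∈ {1, …, n}: ⟨λ, β_i⟩ > 0 if and only if ⟨λ', β_i⟩ > 0, and ⟨λ, β_i⟩ < 0 if and only if ⟨λ', β_i⟩ < 0. (In particular {i : ⟨λ, β_i⟩ ≥ 0} = {i : ⟨λ', β_i⟩ ≥ 0}.) -/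
lemma pairR_def (lam chi : Fin 2 → ℝ) :
    pairR lam chi = lam 0 * chi 0 + lam 1 * chi 1 := by
  simp [pairR, Fin.sum_univ_two]

lemma aux_min {n : ℕ} (f : Fin n → ℝ) (hf : ∀ i, 0 < f i) :
    ∃ t : ℝ, 0 < t ∧ ∀ i, t ≤ f i := by
  rcases isEmpty_or_nonempty (Fin n) with h | h
  · exact ⟨1, one_pos, fun i => isEmptyElim i⟩
  · refine ⟨Finset.univ.inf' Finset.univ_nonempty f, ?_,
      fun i => Finset.inf'_le _ (Finset.mem_univ i)⟩
    rw [Finset.lt_inf'_iff]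
    exact fun i _ => hf i

lemma sign_pres {a b : ℝ} (h : |a - b| < |b|) :
    ((0 < a ↔ 0 < b) ∧ (a < 0 ↔ b < 0)) := by
  rcases abs_lt.mp h with ⟨h1, h2⟩
  rcases lt_trichotomy b 0 with hb | hb | hb
  · rw [abs_of_neg hb] at h1 h2
    constructor <;> constructor <;> intro hx <;> linarith
  · exfalso
    rw [hb] at h
    simp at h
    linarith [abs_nonneg a]
  · rw [abs_of_pos hb] at h1 h2
    constructor <;> constructor <;> intro hx <;> linarith

lemma pair_est {x y v : Fin 2 → ℝ} {δ : ℝ} (h0 : |x 0 - y 0| ≤ δ) (h1 : |x 1 - y 1| ≤ δ) :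
    |pairR x v - pairR y v| ≤ δ * (|v 0| + |v 1|) := by
  rw [pairR_def, pairR_def]
  have e : x 0 * v 0 + x 1 * v 1 - (y 0 * v 0 + y 1 * v 1)
      = (x 0 - y 0) * v 0 + (x 1 - y 1) * v 1 := by ring
  rw [e]
  calc |(x 0 - y 0) * v 0 + (x 1 - y 1) * v 1|
      ≤ |(x 0 - y 0) * v 0| + |(x 1 - y 1) * v 1| := abs_add_le _ _
    _ = |x 0 - y 0| * |v 0| + |x 1 - y 1| * |v 1| := by rw [abs_mul, abs_mul]
    _ ≤ δ * |v 0| + δ * |v 1| :=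
        add_le_add (mul_le_mul_of_nonneg_right h0 (abs_nonneg _))
          (mul_le_mul_of_nonneg_right h1 (abs_nonneg _))
    _ = δ * (|v 0| + |v 1|) := by ring

/-- combinatorial form of the second assertion of Lemma 4.5: any nonzero
real cocharacter `λ'` orthogonal to `ℓ` can be replaced by an integral cocharacter `λ`
with `⟨λ, ℓ⟩ < 0` whose pairings with the weights have the same signs as those of `λ'`. -/
theorem perturb_orthogonal_cocharacter {n : ℕ}
    (ℓ : Fin 2 → ℝ) (hℓ : ℓ ≠ 0)
    (β : Fin n → Fin 2 → ℤ)
    (hβ : ∀ i, ¬ ∃ c : ℝ, (fun k => ((β i k : ℝ))) = c • ℓ)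
    (lam' : Fin 2 → ℝ) (hlam'ne : lam' ≠ 0) (hlam'perp : pairR lam' ℓ = 0) :
    ∃ lam : Fin 2 → ℤ, pairR (fun k => (lam k : ℝ)) ℓ < 0 ∧
      ∀ i, (0 < pairR (fun k => (lam k : ℝ)) (fun k => ((β i k : ℝ))) ↔
              0 < pairR lam' (fun k => ((β i k : ℝ)))) ∧
           (pairR (fun k => (lam k : ℝ)) (fun k => ((β i k : ℝ))) < 0 ↔
              pairR lam' (fun k => ((β i k : ℝ))) < 0) := by
  classical
  set βR : Fin n → Fin 2 → ℝ := fun i k => ((β i k : ℝ)) with hβRdef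
  have hℓne : ℓ 0 ≠ 0 ∨ ℓ 1 ≠ 0 := by
    by_contra hc
    push_neg at hc
    exact hℓ (funext fun k => by fin_cases k <;> simp [hc.1, hc.2])
  have hlne : lam' 0 ≠ 0 ∨ lam' 1 ≠ 0 := by
    by_contra hc
    push_neg at hc
    exact hlam'ne (funext fun k => by fin_cases k <;> simp [hc.1, hc.2])
  have hperp : lam' 0 * ℓ 0 + lam' 1 * ℓ 1 = 0 := by
    rw [← pairR_def]; exact hlam'perp
  -- Step A: no weight pairs to zero with lam'
  have hA : ∀ i, pairR lam' (βR i) ≠ 0 := by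
    intro i hzero
    apply hβ i
    rw [pairR_def] at hzero
    have hdet : ℓ 0 * βR i 1 - ℓ 1 * βR i 0 = 0 := by
      rcases hlne with h | h
      · have h0 : lam' 0 * (ℓ 0 * βR i 1 - ℓ 1 * βR i 0) = 0 := by
          linear_combination (βR i 1) * hperp - (ℓ 1) * hzero
        exact (mul_eq_zero.mp h0).resolve_left h
      · have h0 : lam' 1 * (ℓ 0 * βR i 1 - ℓ 1 * βR i 0) = 0 := by
          linear_combination (ℓ 0) * hzero - (βR i 0) * hperp
        exact (mul_eq_zero.mp h0).resolve_left h
    simp only [hβRdef] at hdet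
    rcases hℓne with h | h
    · refine ⟨((β i 0 : ℝ)) / ℓ 0, funext fun k => ?_⟩
      fin_cases k <;> simp only [Pi.smul_apply, smul_eq_mul, Fin.zero_eta, Fin.mk_one, Fin.isValue]
      · field_simp
      · field_simp
        linear_combination hdet
    · refine ⟨((β i 1 : ℝ)) / ℓ 1, funext fun k => ?_⟩
      fin_cases k <;> simp only [Pi.smul_apply, smul_eq_mul, Fin.zero_eta, Fin.mk_one, Fin.isValue]
      · field_simp
        linear_combination -hdet
      · field_simp
  -- Step B: perturb lam' in direction -ℓ
  obtain ⟨t, ht, htle⟩ := aux_min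
    (fun i => |pairR lam' (βR i)| / (|pairR ℓ (βR i)| + 1))
    (fun i => div_pos (abs_pos.mpr (hA i)) (by positivity))
  set y : Fin 2 → ℝ := fun k => lam' k - t * ℓ k with hydef
  have hyℓ : pairR y ℓ < 0 := by
    rw [pairR_def]
    have hsq : 0 < ℓ 0 ^ 2 + ℓ 1 ^ 2 := by
      rcases hℓne with h | h <;> positivity
    have : y 0 * ℓ 0 + y 1 * ℓ 1 = -(t * (ℓ 0 ^ 2 + ℓ 1 ^ 2)) := by
      simp only [hydef]
      linear_combination hperp
    rw [this]
    have := mul_pos ht hsq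
    linarith
  have hyβ : ∀ i, |pairR y (βR i) - pairR lam' (βR i)| < |pairR lam' (βR i)| := by
    intro i
    have hsub : pairR y (βR i) - pairR lam' (βR i) = -(t * pairR ℓ (βR i)) := by
      simp only [pairR_def, hydef]; ring
    rw [hsub, abs_neg, abs_mul, abs_of_pos ht]
    have h1 : t * (|pairR ℓ (βR i)| + 1) ≤ |pairR lam' (βR i)| := by
      have := htle i
      rw [le_div_iff₀ (by positivity)] at this
      exact this
    nlinarith [abs_nonneg (pairR ℓ (βR i))]
  have hyβne : ∀ i, pairR y (βR i) ≠ 0 := by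
    intro i h
    have := hyβ i
    rw [h] at this
    simp at this
  -- Step C: choose δ and rational approximation
  obtain ⟨δ₀, hδ₀, hδ₀le⟩ := aux_min
    (fun i => |pairR y (βR i)| / (|βR i 0| + |βR i 1| + 1))
    (fun i => div_pos (abs_pos.mpr (hyβne i)) (by positivity))
  set δ : ℝ := min δ₀ ((-pairR y ℓ) / (|ℓ 0| + |ℓ 1| + 1)) with hδdef
  have hδpos : 0 < δ := lt_min hδ₀ (div_pos (by linarith) (by positivity))
  obtain ⟨q0, hq0⟩ := exists_rat_btwn (show y 0 - δ < y 0 + δ by linarith)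
  obtain ⟨q1, hq1⟩ := exists_rat_btwn (show y 1 - δ < y 1 + δ by linarith)
  set x : Fin 2 → ℝ := ![(q0 : ℝ), (q1 : ℝ)] with hxdef
  have hx0 : |x 0 - y 0| ≤ δ := by
    rw [abs_le]; simp only [hxdef, Matrix.cons_val_zero]
    constructor <;> linarith [hq0.1, hq0.2]
  have hx1 : |x 1 - y 1| ≤ δ := by
    rw [abs_le]; simp only [hxdef, Matrix.cons_val_one, Matrix.head_cons, Matrix.cons_val_zero]
    constructor <;> linarith [hq1.1, hq1.2]
  have hxℓ : pairR x ℓ < 0 := by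
    have hest := pair_est (v := ℓ) hx0 hx1
    have h1 : δ * (|ℓ 0| + |ℓ 1| + 1) ≤ -pairR y ℓ := by
      have := min_le_right δ₀ ((-pairR y ℓ) / (|ℓ 0| + |ℓ 1| + 1))
      rw [← hδdef, le_div_iff₀ (by positivity)] at this
      exact this
    have h2 := (abs_le.mp hest).2
    nlinarith [abs_nonneg (ℓ 0), abs_nonneg (ℓ 1)]
  have hxβ : ∀ i, |pairR x (βR i) - pairR y (βR i)| < |pairR y (βR i)| := by
    intro i
    have hest := pair_est (v := βR i) hx0 hx1
    have h1 : δ * (|βR i 0| + |βR i 1| + 1) ≤ |pairR y (βR i)| := by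
      have h2 : δ ≤ |pairR y (βR i)| / (|βR i 0| + |βR i 1| + 1) :=
        le_trans (min_le_left δ₀ ((-pairR y ℓ) / (|ℓ 0| + |ℓ 1| + 1))) (hδ₀le i)
      rw [le_div_iff₀ (by positivity)] at h2
      exact h2
    nlinarith [abs_nonneg (βR i 0), abs_nonneg (βR i 1)]
  -- Step D: clear denominators
  have hd0pos : (0 : ℝ) < (q0.den : ℝ) := by exact_mod_cast q0.pos
  have hd1pos : (0 : ℝ) < (q1.den : ℝ) := by exact_mod_cast q1.pos
  set D : ℝ := (q0.den : ℝ) * (q1.den : ℝ) with hDdef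
  set lam : Fin 2 → ℤ := ![q0.num * (q1.den : ℤ), q1.num * (q0.den : ℤ)] with hlamdef
  have hc0 : ((lam 0 : ℤ) : ℝ) = D * x 0 := by
    simp only [hlamdef, hxdef, hDdef, Matrix.cons_val_zero]
    rw [Rat.cast_def]
    push_cast
    field_simp
  have hc1 : ((lam 1 : ℤ) : ℝ) = D * x 1 := by
    simp only [hlamdef, hxdef, hDdef, Matrix.cons_val_one, Matrix.head_cons]
    rw [Rat.cast_def]
    push_cast
    field_simp
  have hDpos : (0 : ℝ) < D := mul_pos hd0pos hd1pos
  have hscale : ∀ v : Fin 2 → ℝ,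
      pairR (fun k => ((lam k : ℤ) : ℝ)) v = D * pairR x v := by
    intro v
    rw [pairR_def, pairR_def, hc0, hc1]
    ring
  refine ⟨lam, ?_, ?_⟩
  · rw [hscale ℓ]
    exact mul_neg_of_pos_of_neg hDpos hxℓ
  · intro i
    have s1 := sign_pres (hxβ i)
    have s2 := sign_pres (hyβ i)
    have hs := hscale (βR i)
    constructor
    · rw [hs]
      constructor
      · intro h
        have hp : 0 < pairR x (βR i) := by nlinarith
        exact s2.1.mp (s1.1.mp hp)
      · intro h
        exact mul_pos hDpos (s1.1.mpr (s2.1.mpr h))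
    · rw [hs]
      constructor
      · intro h
        have hp : pairR x (βR i) < 0 := by nlinarith
        exact s2.2.mp (s1.2.mp hp)
      · intro h
        exact mul_neg_of_pos_of_neg hDpos (s1.2.mpr (s2.2.mpr h))
end

section
/- Claim 4.2 in the case of trivial Weyl group (ρ = 0): Suppose χ ∈ M_ℝ satisfies ⟨λ', χ − θ⟩ ≤ 0, r_χ ≥ 1/2, and −η_0/2 ≤ ⟨λ_0, χ − θ⟩ ≤ Q. Let S ⊆ {1, …, n} be nonempty with ⟨λ', β_i⟩ < 0 for all i ∈ S, and set μ := χ − ∑_{i∈S} β_i. Then |⟨λ_0, μ − θ⟩| ≤ η_0/2, and r_μ ≤ r_χ, with strict inequality r_μ < r_χ whenever r_χ > 1/2. -/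
noncomputable section

/-- `D := −∑_{i : ⟨λ', β_i⟩ ≤ 0} ⟨λ', β_i⟩`. -/
def Dval {n : ℕ} (β : Fin n → Fin 2 → ℝ) (lam' : Fin 2 → ℝ) : ℝ :=
  -∑ i ∈ Finset.univ.filter (fun i => pairR lam' (β i) ≤ 0), pairR lam' (β i)

/-- `Q := η_0/2 + ∑_{i : ⟨λ', β_i⟩ < 0} ⟨λ_0, β_i⟩`, where `η_0 = −∑_i ⟨λ_0, β_i⟩`. -/
def Qval {n : ℕ} (β : Fin n → Fin 2 → ℝ) (lam0 lam' : Fin 2 → ℝ) : ℝ :=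
  (-∑ i, pairR lam0 (β i)) / 2 +
    ∑ i ∈ Finset.univ.filter (fun i => pairR lam' (β i) < 0), pairR lam0 (β i)

/-- r_nu := |pair(lam0-orthogonal lam', nu - theta)| / D. -/
def rval {n : ℕ} (β : Fin n → Fin 2 → ℝ) (lam' θ ν : Fin 2 → ℝ) : ℝ :=
  |pairR lam' (ν - θ)| / Dval β lam'

lemma pairR_sub (l a b : Fin 2 → ℝ) : pairR l (a - b) = pairR l a - pairR l b := by
  simp [pairR, mul_sub, Finset.sum_sub_distrib]

lemma pairR_sum {n : ℕ} (l : Fin 2 → ℝ) (S : Finset (Fin n)) (f : Fin n → Fin 2 → ℝ) :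
    pairR l (∑ i ∈ S, f i) = ∑ i ∈ S, pairR l (f i) := by
  simp only [pairR, Finset.sum_apply, Finset.mul_sum]
  exact Finset.sum_comm

lemma pairR_eq_zero_of_span {n : ℕ} (β : Fin n → Fin 2 → ℝ)
    (hspan : Submodule.span ℝ (Set.range β) = ⊤) (l : Fin 2 → ℝ)
    (h : ∀ i, pairR l (β i) = 0) : l = 0 := by
  let L : (Fin 2 → ℝ) →ₗ[ℝ] ℝ :=
    { toFun := pairR l
      map_add' := by intro a b; simp [pairR, mul_add, Finset.sum_add_distrib]
      map_smul' := by intro c a; simp [pairR, Finset.mul_sum, mul_left_comm, mul_add] }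
  have hker : ∀ v : Fin 2 → ℝ, L v = 0 := by
    intro v
    have hv : v ∈ Submodule.span ℝ (Set.range β) := by rw [hspan]; trivial
    refine Submodule.span_induction ?_ ?_ ?_ ?_ hv
    · rintro x ⟨i, rfl⟩; exact h i
    · simp
    · intro x y _ _ hx hy; simp [map_add, hx, hy]
    · intro c x _ hx; simp [map_smul, hx]
  funext k
  have := hker (Pi.single k 1)
  simpa [L, pairR, Pi.single_apply, Finset.mul_sum] using this

/-- Claim 4.2 with trivial Weyl group. -/
theorem claim_4_2_trivial_weyl {n : ℕ} (hn : 1 ≤ n)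
    (β : Fin n → Fin 2 → ℝ)
    (hβint : ∀ i, ∃ b : Fin 2 → ℤ, β i = fun k => ((b k : ℝ)))
    (hspan : Submodule.span ℝ (Set.range β) = ⊤)
    (lam0 : Fin 2 → ℝ) (hlam0 : ∀ i, pairR lam0 (β i) < 0)
    (lam' : Fin 2 → ℝ) (hlam'ne : lam' ≠ 0)
    (hlam'ω : pairR lam' (∑ i, β i) = 0)
    (θ : Fin 2 → ℝ)
    (χ : Fin 2 → ℝ)
    (hχ1 : pairR lam' (χ - θ) ≤ 0)
    (hχ2 : 1 / 2 ≤ rval β lam' θ χ)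
    (hχ3 : -((-∑ i, pairR lam0 (β i)) / 2) ≤ pairR lam0 (χ - θ))
    (hχ4 : pairR lam0 (χ - θ) ≤ Qval β lam0 lam')
    (S : Finset (Fin n)) (hS : S.Nonempty)
    (hSneg : ∀ i ∈ S, pairR lam' (β i) < 0)
    (μ : Fin 2 → ℝ) (hμ : μ = χ - ∑ i ∈ S, β i) :
    |pairR lam0 (μ - θ)| ≤ (-∑ i, pairR lam0 (β i)) / 2 ∧
      rval β lam' θ μ ≤ rval β lam' θ χ ∧
      (1 / 2 < rval β lam' θ χ → rval β lam' θ μ < rval β lam' θ χ) := by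
  -- notation
  set T := Finset.univ.filter (fun i => pairR lam' (β i) ≤ 0) with hT
  set T' := Finset.univ.filter (fun i => pairR lam' (β i) < 0) with hT'
  have hsumlam' : ∑ i, pairR lam' (β i) = 0 := by rw [← pairR_sum]; exact hlam'ω
  -- some i has pairR lam' (β i) < 0
  have hexneg : ∃ i, pairR lam' (β i) < 0 := by
    by_contra h
    push_neg at h
    have hall0 : ∀ i, pairR lam' (β i) = 0 := by
      intro i
      have := (Finset.sum_eq_zero_iff_of_nonneg
        (fun i _ => h i)).mp hsumlam' i (Finset.mem_univ i)
      exact this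
    exact hlam'ne (pairR_eq_zero_of_span β hspan lam' hall0)
  obtain ⟨i0, hi0⟩ := hexneg
  have hi0T : i0 ∈ T := by simp [hT, hi0.le]
  -- D > 0
  have hD : 0 < Dval β lam' := by
    have h1 : ∑ i ∈ T, pairR lam' (β i) =
        pairR lam' (β i0) + ∑ i ∈ T.erase i0, pairR lam' (β i) :=
      (Finset.add_sum_erase T _ hi0T).symm
    have h2 : ∑ i ∈ T.erase i0, pairR lam' (β i) ≤ 0 :=
      Finset.sum_nonpos (fun i hi => by
        have := Finset.mem_of_mem_erase hi
        simpa [hT] using (Finset.mem_filter.mp this).2)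
    have : ∑ i ∈ T, pairR lam' (β i) < 0 := by linarith
    unfold Dval; rw [← hT]; linarith
  -- subset facts
  have hST' : S ⊆ T' := fun i hi => by simp [hT', hSneg i hi]
  have hST : S ⊆ T := fun i hi => by simp [hT, (hSneg i hi).le]
  -- s := -∑_S ⟨λ', β i⟩
  set s := -∑ i ∈ S, pairR lam' (β i) with hs
  have hspos : 0 < s := by
    have : ∑ i ∈ S, pairR lam' (β i) < 0 :=
      Finset.sum_neg (fun i hi => hSneg i hi) hS
    linarith
  have hsD : s ≤ Dval β lam' := by
    have hsd : ∑ i ∈ T, pairR lam' (β i)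
        = ∑ i ∈ S, pairR lam' (β i) + ∑ i ∈ T \ S, pairR lam' (β i) :=
      (Finset.sum_sdiff hST).symm.trans (by ring)
    have : ∑ i ∈ T \ S, pairR lam' (β i) ≤ 0 :=
      Finset.sum_nonpos (fun i hi => by
        have := (Finset.mem_sdiff.mp hi).1
        simpa [hT] using (Finset.mem_filter.mp this).2)
    unfold Dval; rw [← hT]; linarith
  -- x := ⟨λ', χ - θ⟩
  set x := pairR lam' (χ - θ) with hx
  have hμx : pairR lam' (μ - θ) = x + s := by
    have : μ - θ = (χ - θ) - ∑ i ∈ S, β i := by rw [hμ]; abel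
    rw [this, pairR_sub, pairR_sum]; rw [hx, hs]; ring
  have hrχ : rval β lam' θ χ = -x / Dval β lam' := by
    unfold rval; rw [← hx, abs_of_nonpos hχ1]
  have hDhalf : Dval β lam' / 2 ≤ -x := by
    rw [hrχ] at hχ2
    rw [div_le_div_iff₀ (by norm_num) hD] at hχ2
    linarith
  -- part 2 and 3
  have habs : |x + s| ≤ -x := by
    rw [abs_le]; constructor <;> linarith
  have hpart2 : rval β lam' θ μ ≤ rval β lam' θ χ := by
    rw [hrχ]; unfold rval; rw [hμx]
    exact div_le_div_of_nonneg_right habs hD.le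
  refine ⟨?_, hpart2, ?_⟩
  · -- lam0 part
    set y := pairR lam0 (χ - θ) with hy
    set t := -∑ i ∈ S, pairR lam0 (β i) with ht
    have hμy : pairR lam0 (μ - θ) = y + t := by
      have : μ - θ = (χ - θ) - ∑ i ∈ S, β i := by rw [hμ]; abel
      rw [this, pairR_sub, pairR_sum]; rw [hy, ht]; ring
    have htpos : 0 < t := by
      have : ∑ i ∈ S, pairR lam0 (β i) < 0 :=
        Finset.sum_neg (fun i _ => hlam0 i) hS
      linarith
    have htle : t ≤ -∑ i ∈ T', pairR lam0 (β i) := by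
      have hsd : ∑ i ∈ T', pairR lam0 (β i)
          = ∑ i ∈ S, pairR lam0 (β i) + ∑ i ∈ T' \ S, pairR lam0 (β i) :=
        (Finset.sum_sdiff hST').symm.trans (by ring)
      have : ∑ i ∈ T' \ S, pairR lam0 (β i) ≤ 0 :=
        Finset.sum_nonpos (fun i _ => (hlam0 i).le)
      rw [ht, hsd]; linarith
    have hQ : Qval β lam0 lam' =
        (-∑ i, pairR lam0 (β i)) / 2 + ∑ i ∈ T', pairR lam0 (β i) := by
      unfold Qval; rw [← hT']
    rw [hμy, abs_le]
    rw [hQ] at hχ4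
    constructor <;> linarith
  · intro hrgt
    rw [hrχ] at hrgt
    rw [div_lt_div_iff₀ (by norm_num) hD] at hrgt
    have habs' : |x + s| < -x := by
      rw [abs_lt]; constructor <;> linarith
    rw [hrχ]; unfold rval; rw [hμx]
    exact (div_lt_div_iff_of_pos_right hD).mpr habs'
end
end

section
/- Claim 4.3 in the case of trivial Weyl group (ρ = 0): Suppose χ ∈ M_ℝ satisfies ⟨λ', χ − θ⟩ ≤ 0, r_χ ≥ 1/2, and Q < ⟨λ_0, χ − θ⟩ ≤ η_0/2. Let S ⊆ {1, …, n} be nonempty with ⟨λ', β_i⟩ > 0 for all i ∈ S, and set μ := χ + ∑_{i∈S} β_i. Then |⟨λ_0, μ − θ⟩| ≤ η_0/2, and r_μ ≤ r_χ, with strict inequality r_μ < r_χ whenever r_χ > 1/2. -/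
noncomputable section

lemma pairR_sum_aux {n : ℕ} (lam : Fin 2 → ℝ) (β : Fin n → Fin 2 → ℝ) (s : Finset (Fin n)) :
    pairR lam (∑ i ∈ s, β i) = ∑ i ∈ s, pairR lam (β i) := by
  simp only [pairR, Finset.sum_apply, Finset.mul_sum]
  exact Finset.sum_comm

lemma pairR_shift_aux (lam θ χ s : Fin 2 → ℝ) :
    pairR lam (χ + s - θ) = pairR lam (χ - θ) + pairR lam s := by
  simp only [pairR, Pi.add_apply, Pi.sub_apply, ← Finset.sum_add_distrib]
  congr 1; ext k; ring

/-- Claim 4.3 with trivial Weyl group. -/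
theorem claim_4_3_trivial_weyl {n : ℕ} (hn : 1 ≤ n)
    (β : Fin n → Fin 2 → ℝ)
    (hβint : ∀ i, ∃ b : Fin 2 → ℤ, β i = fun k => ((b k : ℝ)))
    (hspan : Submodule.span ℝ (Set.range β) = ⊤)
    (lam0 : Fin 2 → ℝ) (hlam0 : ∀ i, pairR lam0 (β i) < 0)
    (lam' : Fin 2 → ℝ) (hlam'ne : lam' ≠ 0)
    (hlam'ω : pairR lam' (∑ i, β i) = 0)
    (θ : Fin 2 → ℝ)
    (χ : Fin 2 → ℝ)
    (hχ1 : pairR lam' (χ - θ) ≤ 0)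
    (hχ2 : 1 / 2 ≤ rval β lam' θ χ)
    (hχ3 : Qval β lam0 lam' < pairR lam0 (χ - θ))
    (hχ4 : pairR lam0 (χ - θ) ≤ (-∑ i, pairR lam0 (β i)) / 2)
    (S : Finset (Fin n)) (hS : S.Nonempty)
    (hSpos : ∀ i ∈ S, 0 < pairR lam' (β i))
    (μ : Fin 2 → ℝ) (hμ : μ = χ + ∑ i ∈ S, β i) :
    |pairR lam0 (μ - θ)| ≤ (-∑ i, pairR lam0 (β i)) / 2 ∧
      rval β lam' θ μ ≤ rval β lam' θ χ ∧
      (1 / 2 < rval β lam' θ χ → rval β lam' θ μ < rval β lam' θ χ) := by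
  
  -- abbreviations
  set D := Dval β lam' with hDdef
  set x := pairR lam' (χ - θ) with hxdef
  set y := pairR lam0 (χ - θ) with hydef
  set P := ∑ i ∈ S, pairR lam' (β i) with hPdef
  set T := ∑ i ∈ S, pairR lam0 (β i) with hTdef
  have hDpos : 0 < D := by
    by_contra h
    push_neg at h
    have h1 : rval β lam' θ χ ≤ 0 :=
      div_nonpos_of_nonneg_of_nonpos (abs_nonneg _) h
    linarith
  have hPpos : 0 < P := Finset.sum_pos hSpos hS
  -- total sum of lam' pairings is 0
  have hsum0 : ∑ i, pairR lam' (β i) = 0 := by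
    rw [← pairR_sum_aux]; exact hlam'ω
  -- D equals the sum over positive pairings
  have hDalt : D = ∑ i ∈ Finset.univ.filter (fun i => ¬ pairR lam' (β i) ≤ 0),
      pairR lam' (β i) := by
    have := Finset.sum_filter_add_sum_filter_not (Finset.univ : Finset (Fin n))
      (fun i => pairR lam' (β i) ≤ 0) (fun i => pairR lam' (β i))
    rw [hsum0] at this
    rw [hDdef, Dval]
    linarith
  have hPD : P ≤ D := by
    rw [hDalt, hPdef]
    apply Finset.sum_le_sum_of_subset_of_nonneg
    · intro i hi
      simp only [Finset.mem_filter, Finset.mem_univ, true_and, not_le]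
      exact hSpos i hi
    · intro i hmem _
      simp only [Finset.mem_filter, Finset.mem_univ, true_and, not_le] at hmem
      linarith
  -- pairing values at μ
  have hμ' : pairR lam' (μ - θ) = x + P := by
    rw [hμ, pairR_shift_aux, pairR_sum_aux, hxdef, hPdef]
  have hμ0 : pairR lam0 (μ - θ) = y + T := by
    rw [hμ, pairR_shift_aux, pairR_sum_aux, hydef, hTdef]
  -- rχ = -x / D
  have habsx : |x| = -x := abs_of_nonpos hχ1
  have hrχ : rval β lam' θ χ = -x / D := by
    rw [rval, ← hxdef, habsx, hDdef]
  have hx2 : D / 2 ≤ -x := by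
    rw [hrχ, div_le_div_iff₀ (by norm_num) hDpos] at hχ2
    linarith
  -- Part 1
  have hT0 : T < 0 := Finset.sum_neg (fun i _ => hlam0 i) hS
  have hAdisj : Disjoint S (Finset.univ.filter (fun i => pairR lam' (β i) < 0)) := by
    rw [Finset.disjoint_left]
    intro i hi hmem
    simp only [Finset.mem_filter, Finset.mem_univ, true_and] at hmem
    linarith [hSpos i hi]
  have hsub : ∑ i, pairR lam0 (β i) ≤
      ∑ i ∈ S ∪ Finset.univ.filter (fun i => pairR lam' (β i) < 0), pairR lam0 (β i) := by
    set t := S ∪ Finset.univ.filter (fun i => pairR lam' (β i) < 0) with ht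
    have hsd : ∑ i ∈ Finset.univ \ t, pairR lam0 (β i) + ∑ i ∈ t, pairR lam0 (β i)
        = ∑ i, pairR lam0 (β i) := Finset.sum_sdiff (Finset.subset_univ t)
    have hnp : ∑ i ∈ Finset.univ \ t, pairR lam0 (β i) ≤ 0 :=
      Finset.sum_nonpos (fun i _ => (hlam0 i).le)
    linarith
  have hunion : ∑ i ∈ S ∪ Finset.univ.filter (fun i => pairR lam' (β i) < 0),
      pairR lam0 (β i) = T + ∑ i ∈ Finset.univ.filter (fun i => pairR lam' (β i) < 0),
      pairR lam0 (β i) := by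
    rw [Finset.sum_union hAdisj]
  have hQ : Qval β lam0 lam' = (-∑ i, pairR lam0 (β i)) / 2 +
      ∑ i ∈ Finset.univ.filter (fun i => pairR lam' (β i) < 0), pairR lam0 (β i) := rfl
  have hpart1 : |pairR lam0 (μ - θ)| ≤ (-∑ i, pairR lam0 (β i)) / 2 := by
    rw [hμ0, abs_le]
    constructor <;> [skip; linarith]
    rw [hQ] at hχ3
    linarith
  refine ⟨hpart1, ?_, ?_⟩
  · rw [rval, ← hDdef, hμ', hrχ]
    have h1 : |x + P| ≤ -x := by rw [abs_le]; constructor <;> linarith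
    gcongr
  · intro hgt
    rw [hrχ] at hgt
    have hx3 : D / 2 < -x := by
      rw [div_lt_div_iff₀ (by norm_num) hDpos] at hgt
      linarith
    rw [rval, ← hDdef, hμ', hrχ]
    have h1 : |x + P| < -x := by rw [abs_lt]; constructor <;> linarith
    gcongr
end
end

section
/- Claim 4.2 in the case of a nontrivial Weyl reflection: Suppose χ ∈ M satisfies ⟨λ', χ − θ⟩ ≤ 0, r_χ ≥ 1/2, and −η_0/2 ≤ ⟨λ_0, χ − θ⟩ ≤ Q. Let S ⊆ {1, …, n} be nonempty with ⟨λ', β_i⟩ < 0 for all i ∈ S, and set μ := χ − ∑_{i∈S} β_i. If ⟨λ', μ + ρ⟩ ≠ 0, so that μ⁺ is defined, then |⟨λ_0, μ⁺ − θ⟩| ≤ η_0/2 and r_{μ⁺} ≤ r_χ, with strict inequality r_{μ⁺} < r_χ whenever r_χ > 1/2. -/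
noncomputable section

/-- The shifted window width: `r_nu := (|pair lam' (nu - theta)| - pair lam' rho) / D`. -/
def rvalRho {n : ℕ} (β : Fin n → Fin 2 → ℝ) (lam' ρ θ ν : Fin 2 → ℝ) : ℝ :=
  (|pairR lam' (ν - θ)| - pairR lam' ρ) / Dval β lam'

/-- The dominant representative `μ⁺` for the ρ-shifted action of the Weyl group `{1, w₀}`:
`μ⁺ = μ` if `pair lam' (μ + ρ) < 0`, and `μ⁺ = w₀(μ + ρ) − ρ` if `pair lam' (μ + ρ) > 0`. -/
def muPlus (lam' ρ : Fin 2 → ℝ) (w0 : (Fin 2 → ℝ) →ₗ[ℝ] (Fin 2 → ℝ))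
    (μ : Fin 2 → ℝ) : Fin 2 → ℝ :=
  if pairR lam' (μ + ρ) < 0 then μ else w0 (μ + ρ) - ρ

/-- Claim 4.2 with a nontrivial Weyl reflection. -/
theorem claim_4_2_weyl {n : ℕ} (hn : 1 ≤ n)
    (β : Fin n → Fin 2 → ℝ)
    (hβint : ∀ i, ∃ b : Fin 2 → ℤ, β i = fun k => ((b k : ℝ)))
    (hspan : Submodule.span ℝ (Set.range β) = ⊤)
    (lam0 : Fin 2 → ℝ) (hlam0 : ∀ i, pairR lam0 (β i) < 0)
    (lam' : Fin 2 → ℝ) (hlam'ne : lam' ≠ 0)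
    (hlam'ω : pairR lam' (∑ i, β i) = 0)
    (hlam'int : ∀ c : Fin 2 → ℤ, ∃ z : ℤ, pairR lam' (fun k => ((c k : ℝ))) = (z : ℝ))
    (ρ : Fin 2 → ℝ)
    (h2ρ : ∃ r : Fin 2 → ℤ, (2 : ℝ) • ρ = fun k => ((r k : ℝ)))
    (hρ0 : pairR lam0 ρ = 0) (hρ' : pairR lam' ρ = -1)
    (w0 : (Fin 2 → ℝ) →ₗ[ℝ] (Fin 2 → ℝ))
    (hw0invol : ∀ ν, w0 (w0 ν) = ν)
    (hw0lam0 : ∀ ν, pairR lam0 (w0 ν) = pairR lam0 ν)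
    (hw0lam' : ∀ ν, pairR lam' (w0 ν) = -pairR lam' ν)
    (θ : Fin 2 → ℝ) (hθ : ∃ c : ℝ, θ = c • (∑ i, β i))
    (χ : Fin 2 → ℝ) (hχM : ∃ c : Fin 2 → ℤ, χ = fun k => ((c k : ℝ)))
    (hχ1 : pairR lam' (χ - θ) ≤ 0)
    (hχ2 : 1 / 2 ≤ rvalRho β lam' ρ θ χ)
    (hχ3 : -((-∑ i, pairR lam0 (β i)) / 2) ≤ pairR lam0 (χ - θ))
    (hχ4 : pairR lam0 (χ - θ) ≤ Qval β lam0 lam')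
    (S : Finset (Fin n)) (hS : S.Nonempty)
    (hSneg : ∀ i ∈ S, pairR lam' (β i) < 0)
    (μ : Fin 2 → ℝ) (hμ : μ = χ - ∑ i ∈ S, β i)
    (hμplus : pairR lam' (μ + ρ) ≠ 0) :
    |pairR lam0 (muPlus lam' ρ w0 μ - θ)| ≤ (-∑ i, pairR lam0 (β i)) / 2 ∧
      rvalRho β lam' ρ θ (muPlus lam' ρ w0 μ) ≤ rvalRho β lam' ρ θ χ ∧
      (1 / 2 < rvalRho β lam' ρ θ χ →
        rvalRho β lam' ρ θ (muPlus lam' ρ w0 μ) < rvalRho β lam' ρ θ χ) := by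

  have hsum_nonpos : ∀ (f : Fin n → ℝ) (s t : Finset (Fin n)), s ⊆ t →
      (∀ i ∈ t, i ∉ s → f i ≤ 0) → ∑ i ∈ t, f i ≤ ∑ i ∈ s, f i := by
    intro f s t hst hf
    have h := Finset.sum_le_sum_of_subset_of_nonneg (f := fun i => -f i) hst
      (fun i hi his => neg_nonneg.mpr (hf i hi his))
    simp only [Finset.sum_neg_distrib] at h
    linarith
  -- linearity of `pairR` in its second argument
  have hadd : ∀ lam x y : Fin 2 → ℝ, pairR lam (x + y) = pairR lam x + pairR lam y := by
    intro lam x y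
    simp [pairR, mul_add, Finset.sum_add_distrib]
  have hsub : ∀ lam x y : Fin 2 → ℝ, pairR lam (x - y) = pairR lam x - pairR lam y := by
    intro lam x y
    simp [pairR, mul_sub, Finset.sum_sub_distrib]
  have hsmul : ∀ (lam : Fin 2 → ℝ) (c : ℝ) (x : Fin 2 → ℝ),
      pairR lam (c • x) = c * pairR lam x := by
    intro lam c x
    simp only [pairR, Pi.smul_apply, smul_eq_mul, Finset.mul_sum]
    exact Finset.sum_congr rfl fun k _ => by ring
  have hFsum : ∀ (lam : Fin 2 → ℝ) (T : Finset (Fin n)),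
      pairR lam (∑ i ∈ T, β i) = ∑ i ∈ T, pairR lam (β i) := by
    intro lam T
    simp only [pairR, Finset.sum_apply, Finset.mul_sum]
    exact Finset.sum_comm
  have hθ' : pairR lam' θ = 0 := by
    obtain ⟨c, hc⟩ := hθ
    rw [hc, hsmul, hlam'ω, mul_zero]
  set A := pairR lam' χ with hA_def
  set s := ∑ i ∈ S, pairR lam' (β i) with hs_def
  set B := pairR lam0 (χ - θ) with hB_def
  set t := ∑ i ∈ S, pairR lam0 (β i) with ht_def
  set η := -∑ i, pairR lam0 (β i) with hη_def
  have hAχ : pairR lam' (χ - θ) = A := by rw [hsub, hθ', hA_def]; ring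
  have hA0 : A ≤ 0 := by rw [hAχ] at hχ1; exact hχ1
  -- integrality
  choose b hb using hβint
  have hzβ : ∀ i, ∃ z : ℤ, pairR lam' (β i) = (z : ℝ) := fun i => by
    rw [hb i]; exact hlam'int (b i)
  choose zb hzb using hzβ
  obtain ⟨cχ, hcχ⟩ := hχM
  obtain ⟨zχ, hzχ⟩ := hlam'int cχ
  have hAint : A = (zχ : ℝ) := by rw [hA_def, hcχ]; exact hzχ
  have hsint : s = ((∑ i ∈ S, zb i : ℤ) : ℝ) := by
    rw [hs_def]; push_cast
    exact Finset.sum_congr rfl fun i _ => hzb i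
  -- facts about D and s
  set D := Dval β lam' with hD_def
  have hSsub : S ⊆ Finset.univ.filter (fun i => pairR lam' (β i) ≤ 0) := fun i hi =>
    Finset.mem_filter.mpr ⟨Finset.mem_univ i, (hSneg i hi).le⟩
  have hfilter_le :
      ∑ i ∈ Finset.univ.filter (fun i => pairR lam' (β i) ≤ 0), pairR lam' (β i) ≤ s :=
    hsum_nonpos _ _ _ hSsub (fun i hi _ => (Finset.mem_filter.mp hi).2)
  have hDs : -D ≤ s := by
    rw [hD_def]; unfold Dval; linarith [hfilter_le]
  have hsneg : s < 0 := by
    rw [hs_def]; exact Finset.sum_neg hSneg hS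
  have hDpos : 0 < D := by linarith
  -- r_chi
  have hrχ : rvalRho β lam' ρ θ χ = (-A + 1) / D := by
    unfold rvalRho
    rw [hAχ, abs_of_nonpos hA0, hρ', ← hD_def]
    ring_nf
  have hDA : D ≤ 2 * (-A + 1) := by
    rw [hrχ, le_div_iff₀ hDpos] at hχ2
    linarith
  -- values at μ
  have hμ'val : pairR lam' μ = A - s := by
    rw [hμ, hsub, hFsum, ← hA_def, ← hs_def]
  have hμ' : pairR lam' (μ - θ) = A - s := by
    rw [hsub, hμ'val, hθ']; ring
  have hμρ : pairR lam' (μ + ρ) = A - s - 1 := by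
    rw [hadd, hμ'val, hρ']; ring
  have hBμ : pairR lam0 (μ - θ) = B - t := by
    have e : μ - θ = (χ - θ) - ∑ i ∈ S, β i := by
      rw [hμ]; abel
    rw [e, hsub, hFsum, ← hB_def, ← ht_def]
  have htneg : t < 0 := by
    rw [ht_def]; exact Finset.sum_neg (fun i _ => hlam0 i) hS
  have hT : ∑ i ∈ Finset.univ.filter (fun i => pairR lam' (β i) < 0), pairR lam0 (β i) ≤ t := by
    rw [ht_def]
    exact hsum_nonpos _ _ _ (fun i hi => Finset.mem_filter.mpr ⟨Finset.mem_univ i, hSneg i hi⟩)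
      (fun i _ _ => (hlam0 i).le)
  have hχ4' : B ≤ η / 2 +
      ∑ i ∈ Finset.univ.filter (fun i => pairR lam' (β i) < 0), pairR lam0 (β i) := by
    rw [hη_def]; unfold Qval at hχ4; exact hχ4
  have habs : |B - t| ≤ η / 2 := abs_le.mpr ⟨by linarith, by linarith⟩
  rcases lt_or_gt_of_ne hμplus with hcase | hcase
  · -- case μ⁺ = μ
    have hmp : muPlus lam' ρ w0 μ = μ := by
      unfold muPlus; rw [if_pos hcase]
    have hAs : A - s ≤ 0 := by
      have h1 : A - s - 1 < 0 := by rw [← hμρ]; exact hcase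
      have h2 : (zχ : ℝ) - ((∑ i ∈ S, zb i : ℤ) : ℝ) < 1 := by
        rw [← hAint, ← hsint]; linarith
      have h3 : zχ - (∑ i ∈ S, zb i) < 1 := by exact_mod_cast h2
      have h4 : zχ - (∑ i ∈ S, zb i) ≤ 0 := by omega
      rw [hAint, hsint]; exact_mod_cast h4
    have hrμ : rvalRho β lam' ρ θ μ = (s - A + 1) / D := by
      unfold rvalRho
      rw [hμ', abs_of_nonpos hAs, hρ', ← hD_def]
      ring_nf
    have hstrict : rvalRho β lam' ρ θ μ < rvalRho β lam' ρ θ χ := by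
      rw [hrμ, hrχ]
      exact (div_lt_div_iff_of_pos_right hDpos).mpr (by linarith)
    refine ⟨?_, ?_, fun _ => by rw [hmp]; exact hstrict⟩
    · rw [hmp, hBμ]; exact habs
    · rw [hmp]; exact hstrict.le
  · -- case μ⁺ = w₀(μ+ρ) - ρ
    have hmp : muPlus lam' ρ w0 μ = w0 (μ + ρ) - ρ := by
      unfold muPlus; rw [if_neg (not_lt.mpr hcase.le)]
    have hAs2 : 2 ≤ A - s := by
      have h1 : 0 < A - s - 1 := by rw [← hμρ]; exact hcase
      have h2 : (1 : ℝ) < (zχ : ℝ) - ((∑ i ∈ S, zb i : ℤ) : ℝ) := by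
        rw [← hAint, ← hsint]; linarith
      have h3 : 1 < zχ - (∑ i ∈ S, zb i) := by exact_mod_cast h2
      have h4 : 2 ≤ zχ - (∑ i ∈ S, zb i) := by omega
      rw [hAint, hsint]; exact_mod_cast h4
    have hl' : pairR lam' (muPlus lam' ρ w0 μ - θ) = -(A - s) + 2 := by
      rw [hmp, hsub, hsub, hw0lam', hμρ, hρ', hθ']; ring
    have hl0 : pairR lam0 (muPlus lam' ρ w0 μ - θ) = B - t := by
      rw [hmp, hsub, hsub, hw0lam0, hadd, hρ0]
      have h5 : pairR lam0 μ - pairR lam0 θ = B - t := by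
        rw [← hsub lam0 μ θ]; exact hBμ
      linarith
    have hneg2 : pairR lam' (muPlus lam' ρ w0 μ - θ) ≤ 0 := by
      rw [hl']; linarith
    have hrμ : rvalRho β lam' ρ θ (muPlus lam' ρ w0 μ) = (A - s - 1) / D := by
      unfold rvalRho
      rw [abs_of_nonpos hneg2, hl', hρ', ← hD_def]
      ring_nf
    refine ⟨?_, ?_, ?_⟩
    · rw [hl0]; exact habs
    · rw [hrμ, hrχ]
      exact (div_le_div_iff_of_pos_right hDpos).mpr (by linarith)
    · intro hgt
      rw [hrχ, lt_div_iff₀ hDpos] at hgt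
      rw [hrμ, hrχ]
      exact (div_lt_div_iff_of_pos_right hDpos).mpr (by linarith)
end
end
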